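/- Let X^w ∼ F^w = F_ind^{w_e} with all marginals F_j continuous and strictly increasing, and let u ⊊ {1,…,d} with complement π = (π_1,…,π_{|π|}). Define W(u_{π_1},…,u_{π_{|π|}}; x_u^w) := E_{V_π}[w_e(x_u^w, F_{π_1}^{-1}(V_{π_1}),…,F_{π_{|π|}}^{-1}(V_{π_{|π|}}))] / E_{F_ind}[w_e(x_u^w, Y_{∼u})] · ∏_{j=1}^{|π|} u_{π_j}, where V_{π_k} ∼ U(0, u_{π_k}) are independent. Then W(·; x_u^w) is a cumulative distribution function on [0,1]^{d−|u|} and the conditional CDF satisfies F^w_{∼u|u}(x_{∼u} | x_u^w) = W(F_{π_1}(x_{π_1}),…,F_{π_{|π|}}(x_{π_{|π|}}); x_u^w). -/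
import Mathlib


open MeasureTheory Set
open scoped ENNReal NNReal

theorem lintegral_pi_prod' : ∀ {n : ℕ} (μ : Fin n → Measure ℝ),
    (∀ i, SigmaFinite (μ i)) → ∀ (g : Fin n → ℝ → ℝ≥0∞), (∀ i, Measurable (g i)) →
    ∫⁻ y, ∏ i, g i (y i) ∂Measure.pi μ = ∏ i, ∫⁻ t, g i t ∂μ i := by
  intro n
  induction n with
  | zero =>
      intro μ _ g _
      simp [lintegral_one, Measure.pi_univ]
  | succ n ih =>
      intro μ hσ g hg
      haveI := hσ
      have h1 := measurePreserving_piFinSuccAbove μ 0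
      have hmeas : Measurable (fun z : ℝ × (Fin n → ℝ) =>
          g 0 z.1 * ∏ i : Fin n, g ((0 : Fin (n+1)).succAbove i) (z.2 i)) := by
        refine ((hg 0).comp measurable_fst).mul ?_
        refine Finset.measurable_prod _ fun i _ => ?_
        exact (hg _).comp ((measurable_pi_apply i).comp measurable_snd)
      calc ∫⁻ y, ∏ i, g i (y i) ∂Measure.pi μ
          = ∫⁻ y, g 0 (y 0) * ∏ i : Fin n,
              g ((0 : Fin (n+1)).succAbove i) (y ((0 : Fin (n+1)).succAbove i)) ∂Measure.pi μ := by
            congr 1; funext y; exact Fin.prod_univ_succAbove (fun i => g i (y i)) 0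
        _ = ∫⁻ z : ℝ × (Fin n → ℝ), g 0 z.1 * ∏ i : Fin n, g ((0 : Fin (n+1)).succAbove i) (z.2 i)
              ∂((μ 0).prod (Measure.pi fun j => μ ((0 : Fin (n+1)).succAbove j))) := by
            rw [← h1.lintegral_comp hmeas]; rfl
        _ = (∫⁻ t, g 0 t ∂μ 0) * ∏ i : Fin n,
              ∫⁻ t, g ((0 : Fin (n+1)).succAbove i) t ∂μ ((0 : Fin (n+1)).succAbove i) := by
            rw [lintegral_prod_mul (f := g 0)
              (g := fun w : Fin n → ℝ => ∏ i : Fin n, g ((0 : Fin (n+1)).succAbove i) (w i))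
              (hg 0).aemeasurable
              (Finset.measurable_prod _ fun i _ => (hg _).comp (measurable_pi_apply i)).aemeasurable,
              ih _ (fun i => inferInstance) _ (fun i => hg _)]
        _ = ∏ i, ∫⁻ t, g i t ∂μ i :=
            (Fin.prod_univ_succAbove (fun i => ∫⁻ t, g i t ∂μ i) 0).symm

theorem lintegral_pi_prod {ι : Type*} [Fintype ι] (μ : ι → Measure ℝ)
    (hσ : ∀ i, SigmaFinite (μ i)) (g : ι → ℝ → ℝ≥0∞) (hg : ∀ i, Measurable (g i)) :
    ∫⁻ y, ∏ i, g i (y i) ∂Measure.pi μ = ∏ i, ∫⁻ t, g i t ∂μ i := by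
  haveI := hσ
  let e := (Fintype.equivFin ι).symm
  have h := measurePreserving_piCongrLeft μ e
  have hmeas : Measurable (fun y : ι → ℝ => ∏ i, g i (y i)) :=
    Finset.measurable_prod _ fun i _ => (hg i).comp (measurable_pi_apply i)
  rw [← h.lintegral_comp hmeas]
  have : ∀ x : Fin (Fintype.card ι) → ℝ,
      ∏ i, g i ((MeasurableEquiv.piCongrLeft (fun _ => ℝ) e) x i) = ∏ j, g (e j) (x j) := by
    intro x
    rw [← e.prod_comp]
    refine Finset.prod_congr rfl fun j _ => ?_
    rw [MeasurableEquiv.coe_piCongrLeft, Equiv.piCongrLeft_apply_apply]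
  simp_rw [this]
  rw [lintegral_pi_prod' _ (fun i => inferInstance) _ (fun i => hg _), ← e.prod_comp]

theorem pi_withDensity {ι : Type*} [Fintype ι] (g : ι → ℝ → ℝ≥0∞) (hg : ∀ i, Measurable (g i))
    (hσ : ∀ i : ι, SigmaFinite ((volume : Measure ℝ).withDensity (g i))) :
    Measure.pi (fun i => (volume : Measure ℝ).withDensity (g i))
      = (volume : Measure (ι → ℝ)).withDensity (fun y => ∏ i, g i (y i)) := by
  haveI := hσ
  refine Measure.pi_eq fun s hs => ?_
  rw [withDensity_apply _ (MeasurableSet.univ_pi hs),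
    ← lintegral_indicator (MeasurableSet.univ_pi hs)]
  have hind : ∀ y : ι → ℝ, (univ.pi s).indicator (fun y => ∏ i, g i (y i)) y
      = ∏ i, (s i).indicator (g i) (y i) := by
    intro y
    by_cases hy : y ∈ univ.pi s
    · rw [indicator_of_mem hy]
      exact Finset.prod_congr rfl fun i _ => (indicator_of_mem (hy i (mem_univ i)) _).symm
    · rw [indicator_of_notMem hy]
      rw [mem_univ_pi] at hy
      push_neg at hy
      obtain ⟨i, hi⟩ := hy
      exact (Finset.prod_eq_zero (Finset.mem_univ i) (indicator_of_notMem hi _)).symm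
  simp_rw [hind]
  rw [show (volume : Measure (ι → ℝ)) = Measure.pi (fun _ => volume) from volume_pi,
    lintegral_pi_prod _ (fun i => inferInstance) _ (fun i => (hg i).indicator (hs i))]
  exact Finset.prod_congr rfl fun i _ => by
    rw [lintegral_indicator (hs i), withDensity_apply _ (hs i)]


/-- Recombine coordinates indexed by `u` and by its complement into a full vector. -/
noncomputable def combine {d : ℕ} (u : Finset (Fin d))
    (a : ∀ _ : u, ℝ) (b : ∀ _ : (uᶜ : Finset (Fin d)), ℝ) : Fin d → ℝ :=
  fun i => if h : i ∈ u then a ⟨i, h⟩ else b ⟨i, Finset.mem_compl.mpr h⟩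

/-- Theorem 1 of the paper: with `X^w ∼ F_ind^{w_e}`, all marginals
continuous and strictly increasing, `u ⊊ {1,…,d}`, the function
`W(t; x_u^w) := E_{V}[w_e(x_u^w, F^{-1}(V))] ∏_j t_j / E_{F_ind}[w_e(x_u^w, Y_{∼u})]`
(equivalently, the normalized integral of `w_e(x_u^w, F^{-1}(·))` over the box
`∏_j (0, t_j]`) is a CDF on `[0,1]^{d-|u|}`, and the conditional CDF satisfies
`F^w_{∼u|u}(x_{∼u}|x_u^w) = W(F_{π_1}(x_{π_1}),…,F_{π_{|π|}}(x_{π_{|π|}}); x_u^w)`. -/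
theorem stmt_4 {d : ℕ} (u : Finset (Fin d)) (hu : u ≠ Finset.univ)
    (F Finv ρj : Fin d → ℝ → ℝ)
    (hF_cont : ∀ j, Continuous (F j))
    (hF_mono : ∀ j, StrictMono (F j))
    (hF_cdf : ∀ j x, F j x = ∫ t in Iic x, ρj j t)
    (hρj_nonneg : ∀ j t, 0 ≤ ρj j t)
    (hρj_meas : ∀ j, Measurable (ρj j))
    (hρj_int : ∀ j, ∫ t, ρj j t = 1)
    -- `Finv j` is the quantile function of `F j`
    (hFinv : ∀ j p, p ∈ Ioo (0:ℝ) 1 → F j (Finv j p) = p)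
    (we : (Fin d → ℝ) → ℝ) (hwe_nonneg : ∀ x, 0 ≤ we x) (hwe_meas : Measurable we)
    (xu : ∀ _ : u, ℝ)
    -- `E_{F_ind}[w_e(x_u^w, Y_{∼u})]` is positive and finite
    (hEu_pos : 0 < ∫ y : ∀ _ : (uᶜ : Finset (Fin d)), ℝ,
        we (combine u xu y) * ∏ j : (uᶜ : Finset (Fin d)), ρj j.1 (y j))
    (hEu_int : Integrable (fun y : ∀ _ : (uᶜ : Finset (Fin d)), ℝ =>
        we (combine u xu y) * ∏ j : (uᶜ : Finset (Fin d)), ρj j.1 (y j))) :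
    -- (i) `W(·; x_u^w)` is a CDF on `[0,1]^{d-|u|}`
    (∃ ν : Measure (∀ _ : (uᶜ : Finset (Fin d)), ℝ), IsProbabilityMeasure ν ∧
      ∀ t : ∀ _ : (uᶜ : Finset (Fin d)), ℝ, (∀ j, t j ∈ Icc (0:ℝ) 1) →
        (∫ v in univ.pi (fun j => Ioc (0:ℝ) (t j)),
            we (combine u xu (fun j => Finv j.1 (v j))))
          / (∫ y : ∀ _ : (uᶜ : Finset (Fin d)), ℝ,
              we (combine u xu y) * ∏ j : (uᶜ : Finset (Fin d)), ρj j.1 (y j))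
        = (ν (univ.pi fun j => Iic (t j))).toReal) ∧
    -- (ii) the conditional CDF of `X^w_{∼u}` given `X^w_u = x_u^w` equals
    -- `W` evaluated at the marginal CDFs
    (∀ xv : ∀ _ : (uᶜ : Finset (Fin d)), ℝ,
      (∫ y in univ.pi (fun j => Iic (xv j)),
          we (combine u xu y) * ∏ j : (uᶜ : Finset (Fin d)), ρj j.1 (y j))
        / (∫ y : ∀ _ : (uᶜ : Finset (Fin d)), ℝ,
            we (combine u xu y) * ∏ j : (uᶜ : Finset (Fin d)), ρj j.1 (y j))
      = (∫ v in univ.pi (fun j => Ioc (0:ℝ) (F j.1 (xv j))),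
            we (combine u xu (fun j => Finv j.1 (v j))))
          / (∫ y : ∀ _ : (uᶜ : Finset (Fin d)), ℝ,
              we (combine u xu y) * ∏ j : (uᶜ : Finset (Fin d)), ρj j.1 (y j))) := by
  classical
  -- basic facts
  have hρInt : ∀ j, Integrable (ρj j) := by
    intro j
    by_contra h
    have := hρj_int j
    rw [integral_undef h] at this
    exact zero_ne_one this
  have hF_nonneg : ∀ j x, 0 ≤ F j x := by
    intro j x
    rw [hF_cdf]
    exact setIntegral_nonneg measurableSet_Iic fun t _ => hρj_nonneg j t
  have hF_le1 : ∀ j x, F j x ≤ 1 := by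
    intro j x
    rw [hF_cdf, ← hρj_int j]
    exact setIntegral_le_integral (hρInt j) (Filter.Eventually.of_forall fun t => hρj_nonneg j t)
  have hF_pos : ∀ j x, 0 < F j x := fun j x =>
    lt_of_le_of_lt (hF_nonneg j (x - 1)) (hF_mono j (by linarith))
  have hF_lt1 : ∀ j x, F j x < 1 := fun j x =>
    lt_of_lt_of_le (hF_mono j (by linarith : x < x + 1)) (hF_le1 j (x + 1))
  have hFm : ∀ j, Measurable (F j) := fun j => (hF_cont j).measurable
  have hFinvF : ∀ j x, Finv j (F j x) = x := fun j x =>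
    (hF_mono j).injective (hFinv j (F j x) ⟨hF_pos j x, hF_lt1 j x⟩)
  have hcomb : Measurable (combine u xu) := by
    apply measurable_pi_lambda
    intro i
    unfold combine
    by_cases h : i ∈ u
    · simp only [dif_pos h]; exact measurable_const
    · simp only [dif_neg h]; exact measurable_pi_apply _
  -- the weight function with density
  set f : (∀ _ : (uᶜ : Finset (Fin d)), ℝ) → ℝ :=
    fun y => we (combine u xu y) * ∏ j : (uᶜ : Finset (Fin d)), ρj j.1 (y j) with hfdef
  have hf_meas : Measurable f := (hwe_meas.comp hcomb).mul
    (Finset.measurable_prod _ fun j _ => (hρj_meas j.1).comp (measurable_pi_apply j))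
  have hf_nonneg : ∀ y, 0 ≤ f y := fun y =>
    mul_nonneg (hwe_nonneg _) (Finset.prod_nonneg fun j _ => hρj_nonneg _ _)
  -- single-coordinate measures
  have hμIic : ∀ (j : Fin d) (c : ℝ),
      ((volume : Measure ℝ).withDensity fun t => ENNReal.ofReal (ρj j t)) (Iic c)
        = ENNReal.ofReal (F j c) := by
    intro j c
    rw [withDensity_apply _ measurableSet_Iic,
      ← ofReal_integral_eq_lintegral_ofReal ((hρInt j).restrict)
        (Filter.Eventually.of_forall fun t => hρj_nonneg j t), ← hF_cdf]
  have hμuniv : ∀ j : Fin d,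
      ((volume : Measure ℝ).withDensity fun t => ENNReal.ofReal (ρj j t)) univ = 1 := by
    intro j
    rw [withDensity_apply _ MeasurableSet.univ, Measure.restrict_univ,
      ← ofReal_integral_eq_lintegral_ofReal (hρInt j)
        (Filter.Eventually.of_forall fun t => hρj_nonneg j t),
      hρj_int j, ENNReal.ofReal_one]
  have hμfin : ∀ j : Fin d,
      IsFiniteMeasure ((volume : Measure ℝ).withDensity fun t => ENNReal.ofReal (ρj j t)) :=
    fun j => ⟨by rw [hμuniv j]; exact ENNReal.one_lt_top⟩
  have hμσ : ∀ j : Fin d,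
      SigmaFinite ((volume : Measure ℝ).withDensity fun t => ENNReal.ofReal (ρj j t)) := by
    intro j
    haveI := hμfin j
    infer_instance
  haveI : ∀ j : (uᶜ : Finset (Fin d)),
      SigmaFinite ((volume : Measure ℝ).withDensity fun t => ENNReal.ofReal (ρj j.1 t)) :=
    fun j => hμσ j.1
  -- pushforward of each coordinate measure under F j is uniform on (0,1]
  have hmap : ∀ j : Fin d,
      Measure.map (F j) ((volume : Measure ℝ).withDensity fun t => ENNReal.ofReal (ρj j t))
        = volume.restrict (Ioc (0:ℝ) 1) := by
    intro j
    haveI := hμfin j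
    haveI : IsFiniteMeasure (Measure.map (F j)
        ((volume : Measure ℝ).withDensity fun t => ENNReal.ofReal (ρj j t))) :=
      ⟨by rw [Measure.map_apply (hFm j) MeasurableSet.univ, preimage_univ, hμuniv j]
          exact ENNReal.one_lt_top⟩
    refine Measure.ext_of_Iic _ _ fun a => ?_
    rw [Measure.map_apply (hFm j) measurableSet_Iic, Measure.restrict_apply measurableSet_Iic]
    rcases le_or_gt a 0 with ha | ha
    · have h1 : F j ⁻¹' Iic a = ∅ := by
        ext x
        simp only [mem_preimage, mem_Iic, mem_empty_iff_false, iff_false, not_le]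
        exact lt_of_le_of_lt ha (hF_pos j x)
      have h2 : Iic a ∩ Ioc (0:ℝ) 1 = ∅ := by
        ext x
        simp only [mem_inter_iff, mem_Iic, mem_Ioc, mem_empty_iff_false, iff_false]
        rintro ⟨hx1, hx2, -⟩
        linarith
      rw [h1, h2]
      simp
    · rcases le_or_gt 1 a with ha1 | ha1
      · have h1 : F j ⁻¹' Iic a = univ :=
          eq_univ_of_forall fun x => le_trans (hF_lt1 j x).le ha1
        have h2 : Iic a ∩ Ioc (0:ℝ) 1 = Ioc 0 1 :=
          inter_eq_self_of_subset_right fun x hx => le_trans hx.2 ha1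
        rw [h1, h2, hμuniv j, Real.volume_Ioc]
        norm_num
      · have hFa := hFinv j a ⟨ha, ha1⟩
        have h1 : F j ⁻¹' Iic a = Iic (Finv j a) := by
          ext x
          simp only [mem_preimage, mem_Iic]
          constructor
          · intro h
            exact (hF_mono j).le_iff_le.mp (by rw [hFa]; exact h)
          · intro h
            calc F j x ≤ F j (Finv j a) := (hF_mono j).le_iff_le.mpr h
              _ = a := hFa
        have h2 : Iic a ∩ Ioc (0:ℝ) 1 = Ioc 0 a := by
          ext x
          simp only [mem_inter_iff, mem_Iic, mem_Ioc]
          constructor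
          · rintro ⟨hx1, hx2, -⟩; exact ⟨hx2, hx1⟩
          · rintro ⟨hx1, hx2⟩; exact ⟨hx2, hx1, hx2.trans ha1.le⟩
        rw [h1, h2, hμIic j, hFa, Real.volume_Ioc, sub_zero]
  -- the coordinate-wise CDF map
  set T : (∀ _ : (uᶜ : Finset (Fin d)), ℝ) → (∀ _ : (uᶜ : Finset (Fin d)), ℝ) :=
    fun y j => F j.1 (y j) with hTdef
  have hT_cont : Continuous T := continuous_pi fun j => (hF_cont j.1).comp (continuous_apply j)
  have hT_inj : Function.Injective T := fun y z h =>
    funext fun j => (hF_mono j.1).injective (congrFun h j)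
  have hT_emb : MeasurableEmbedding T := hT_cont.measurableEmbedding hT_inj
  have hT_meas : Measurable T := hT_emb.measurable
  -- product measure facts
  have key2a : Measure.pi (fun _ : (uᶜ : Finset (Fin d)) => volume.restrict (Ioc (0:ℝ) 1))
      = Measure.map T (Measure.pi fun j : (uᶜ : Finset (Fin d)) =>
          (volume : Measure ℝ).withDensity fun t => ENNReal.ofReal (ρj j.1 t)) := by
    refine Measure.pi_eq fun s hs => ?_
    rw [Measure.map_apply hT_meas (MeasurableSet.univ_pi hs)]
    have hpre : T ⁻¹' (univ.pi s) = univ.pi fun j => F j.1 ⁻¹' s j := by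
      ext y
      simp only [hTdef, mem_preimage, mem_univ_pi]
    rw [hpre, Measure.pi_pi]
    exact Finset.prod_congr rfl fun j _ => by
      rw [← hmap j.1, Measure.map_apply (hFm j.1) (hs j)]
  have key2b : Measure.pi (fun _ : (uᶜ : Finset (Fin d)) => volume.restrict (Ioc (0:ℝ) 1))
      = volume.restrict (univ.pi fun _ : (uᶜ : Finset (Fin d)) => Ioc (0:ℝ) 1) := by
    refine Measure.pi_eq fun s hs => ?_
    rw [Measure.restrict_apply (MeasurableSet.univ_pi hs)]
    have hint : univ.pi s ∩ (univ.pi fun _ : (uᶜ : Finset (Fin d)) => Ioc (0:ℝ) 1)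
        = univ.pi fun j => s j ∩ Ioc (0:ℝ) 1 := by
      ext y
      simp only [mem_inter_iff, mem_univ_pi, mem_inter_iff]
      exact ⟨fun ⟨h1, h2⟩ j => ⟨h1 j, h2 j⟩, fun h => ⟨fun j => (h j).1, fun j => (h j).2⟩⟩
    rw [hint, volume_pi_pi]
    exact Finset.prod_congr rfl fun j _ => (Measure.restrict_apply (hs j)).symm
  have key2 : Measure.map T (Measure.pi fun j : (uᶜ : Finset (Fin d)) =>
        (volume : Measure ℝ).withDensity fun t => ENNReal.ofReal (ρj j.1 t))
      = volume.restrict (univ.pi fun _ : (uᶜ : Finset (Fin d)) => Ioc (0:ℝ) 1) :=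
    key2a.symm.trans key2b
  have hpiμ : (Measure.pi fun j : (uᶜ : Finset (Fin d)) =>
        (volume : Measure ℝ).withDensity fun t => ENNReal.ofReal (ρj j.1 t))
      = (volume : Measure (∀ _ : (uᶜ : Finset (Fin d)), ℝ)).withDensity
          fun y => ENNReal.ofReal (∏ j : (uᶜ : Finset (Fin d)), ρj j.1 (y j)) := by
    rw [pi_withDensity (fun j : (uᶜ : Finset (Fin d)) => fun t => ENNReal.ofReal (ρj j.1 t))
      (fun j => (hρj_meas j.1).ennreal_ofReal) (fun j => hμσ j.1)]
    congr 1
    funext y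
    rw [ENNReal.ofReal_prod_of_nonneg fun j _ => hρj_nonneg j.1 (y j)]
  -- the core change-of-variables identity
  have hcore : ∀ t : ∀ _ : (uᶜ : Finset (Fin d)), ℝ, (∀ j, t j ≤ 1) →
      (∫ v in univ.pi (fun j => Ioc (0:ℝ) (t j)),
          we (combine u xu (fun j => Finv j.1 (v j))))
        = ∫ y in univ.pi (fun j => F j.1 ⁻¹' Iic (t j)), f y := by
    intro t ht
    have hBmeas : MeasurableSet (univ.pi fun j : (uᶜ : Finset (Fin d)) => Ioc (0:ℝ) (t j)) :=
      MeasurableSet.univ_pi fun j => measurableSet_Ioc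
    have hSmeas : MeasurableSet (univ.pi fun j : (uᶜ : Finset (Fin d)) => F j.1 ⁻¹' Iic (t j)) :=
      MeasurableSet.univ_pi fun j => (hFm j.1) measurableSet_Iic
    have hsub : (univ.pi fun j : (uᶜ : Finset (Fin d)) => Ioc (0:ℝ) (t j))
        ⊆ univ.pi fun _ : (uᶜ : Finset (Fin d)) => Ioc (0:ℝ) 1 := fun v hv j hj =>
      ⟨(hv j hj).1, (hv j hj).2.trans (ht j)⟩
    have h1 : (volume : Measure (∀ _ : (uᶜ : Finset (Fin d)), ℝ)).restrict
          (univ.pi fun j => Ioc (0:ℝ) (t j))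
        = (Measure.map T (Measure.pi fun j : (uᶜ : Finset (Fin d)) =>
            (volume : Measure ℝ).withDensity fun t => ENNReal.ofReal (ρj j.1 t))).restrict
          (univ.pi fun j => Ioc (0:ℝ) (t j)) := by
      rw [key2, Measure.restrict_restrict hBmeas, inter_eq_self_of_subset_left hsub]
    have hpre : T ⁻¹' (univ.pi fun j => Ioc (0:ℝ) (t j))
        = univ.pi fun j => F j.1 ⁻¹' Iic (t j) := by
      ext y
      simp only [hTdef, mem_preimage, mem_univ_pi, mem_Ioc, mem_Iic]
      exact forall_congr' fun j => ⟨fun h => h.2, fun h => ⟨hF_pos j.1 (y j), h⟩⟩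
    calc (∫ v in univ.pi fun j => Ioc (0:ℝ) (t j),
            we (combine u xu fun j => Finv j.1 (v j)))
        = ∫ v in univ.pi fun j => Ioc (0:ℝ) (t j),
            we (combine u xu fun j => Finv j.1 (v j))
            ∂(Measure.map T (Measure.pi fun j : (uᶜ : Finset (Fin d)) =>
              (volume : Measure ℝ).withDensity fun t => ENNReal.ofReal (ρj j.1 t))) := by
          rw [h1]
      _ = ∫ y in T ⁻¹' (univ.pi fun j => Ioc (0:ℝ) (t j)),
            we (combine u xu fun j => Finv j.1 (T y j))
            ∂(Measure.pi fun j : (uᶜ : Finset (Fin d)) =>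
              (volume : Measure ℝ).withDensity fun t => ENNReal.ofReal (ρj j.1 t)) :=
          hT_emb.setIntegral_map _ _
      _ = ∫ y in univ.pi fun j => F j.1 ⁻¹' Iic (t j), we (combine u xu y)
            ∂(Measure.pi fun j : (uᶜ : Finset (Fin d)) =>
              (volume : Measure ℝ).withDensity fun t => ENNReal.ofReal (ρj j.1 t)) := by
          rw [hpre]
          refine integral_congr_ae (Filter.Eventually.of_forall fun y => ?_)
          have hy : (fun j : (uᶜ : Finset (Fin d)) => Finv j.1 (T y j)) = y :=
            funext fun j => by simp only [hTdef]; exact hFinvF j.1 (y j)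
          simp only [hy]
      _ = ∫ y in univ.pi fun j => F j.1 ⁻¹' Iic (t j), f y := by
          rw [hpiμ]
          have hcoe : (fun y : ∀ _ : (uᶜ : Finset (Fin d)), ℝ =>
              ENNReal.ofReal (∏ j : (uᶜ : Finset (Fin d)), ρj j.1 (y j)))
            = (fun y : ∀ _ : (uᶜ : Finset (Fin d)), ℝ =>
              ((Real.toNNReal (∏ j : (uᶜ : Finset (Fin d)), ρj j.1 (y j)) : ℝ≥0) : ℝ≥0∞)) := rfl
          rw [hcoe, setIntegral_withDensity_eq_setIntegral_smul
            (f := fun y : ∀ _ : (uᶜ : Finset (Fin d)), ℝ =>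
              Real.toNNReal (∏ j : (uᶜ : Finset (Fin d)), ρj j.1 (y j)))
            (by exact (Finset.measurable_prod _ fun j _ =>
              (hρj_meas j.1).comp (measurable_pi_apply j)).real_toNNReal) _ hSmeas]
          refine setIntegral_congr_fun hSmeas fun y _ => ?_
          simp only [hfdef, NNReal.smul_def, Real.coe_toNNReal _
            (Finset.prod_nonneg fun j _ => hρj_nonneg j.1 (y j)), smul_eq_mul]
          ring
  refine ⟨⟨(ENNReal.ofReal (∫ y, f y))⁻¹ • Measure.map T
      ((volume : Measure (∀ _ : (uᶜ : Finset (Fin d)), ℝ)).withDensity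
        fun y => ENNReal.ofReal (f y)), ?_, ?_⟩, ?_⟩
  · -- probability measure
    constructor
    rw [Measure.smul_apply, Measure.map_apply hT_meas MeasurableSet.univ, preimage_univ,
      withDensity_apply _ MeasurableSet.univ, Measure.restrict_univ,
      ← ofReal_integral_eq_lintegral_ofReal hEu_int
        (Filter.Eventually.of_forall hf_nonneg), smul_eq_mul]
    exact ENNReal.inv_mul_cancel (ENNReal.ofReal_pos.mpr hEu_pos).ne' ENNReal.ofReal_ne_top
  · -- part (i)
    intro t ht
    rw [hcore t fun j => (ht j).2]
    have hSmeas : MeasurableSet (univ.pi fun j : (uᶜ : Finset (Fin d)) => F j.1 ⁻¹' Iic (t j)) :=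
      MeasurableSet.univ_pi fun j => (hFm j.1) measurableSet_Iic
    have hpre : T ⁻¹' (univ.pi fun j => Iic (t j))
        = univ.pi fun j => F j.1 ⁻¹' Iic (t j) := by
      ext y
      simp only [hTdef, mem_preimage, mem_univ_pi, mem_Iic]
    rw [Measure.smul_apply, Measure.map_apply hT_meas
        (MeasurableSet.univ_pi fun j => measurableSet_Iic), hpre,
      withDensity_apply _ hSmeas,
      ← ofReal_integral_eq_lintegral_ofReal (hEu_int.restrict)
        (Filter.Eventually.of_forall hf_nonneg), smul_eq_mul,
      ENNReal.toReal_mul, ENNReal.toReal_inv, ENNReal.toReal_ofReal hEu_pos.le,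
      ENNReal.toReal_ofReal (setIntegral_nonneg hSmeas fun y _ => hf_nonneg y)]
    rw [div_eq_mul_inv, mul_comm]
  · -- part (ii)
    intro xv
    rw [hcore (fun j => F j.1 (xv j)) (fun j => (hF_lt1 j.1 (xv j)).le)]
    have hset : (univ.pi fun j : (uᶜ : Finset (Fin d)) => F j.1 ⁻¹' Iic (F j.1 (xv j)))
        = univ.pi fun j => Iic (xv j) := by
      ext y
      simp only [mem_univ_pi, mem_preimage, mem_Iic]
      exact forall_congr' fun j => (hF_mono j.1).le_iff_le
    rw [hset]
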